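/- The six functions J₀₁, J₀₂, J₀₃, J₁₂, J₁₃, J₂₃ of the geodesic polar realization satisfy, at every point of D, the commutation relations of the Lie algebra so_{κ₁,κ₂}(4) with respect to the canonical Poisson bracket: {J₁₂,J₁₃} = κ₂J₂₃, {J₁₂,J₂₃} = −J₁₃, {J₁₃,J₂₃} = J₁₂, {J₁₂,J₀₁} = J₀₂, {J₁₃,J₀₁} = J₀₃, {J₂₃,J₀₂} = J₀₃, {J₁₂,J₀₂} = −κ₂J₀₁, {J₁₃,J₀₃} = −κ₂J₀₁, {J₂₃,J₀₃} = −J₀₂, {J₀₁,J₀₂} = κ₁J₁₂, {J₀₁,J₀₃} = κ₁J₁₃, {J₀₂,J₀₃} = κ₁κ₂J₂₃, {J₀₁,J₂₃} = 0, {J₀₂,J₁₃} = 0, {J₀₃,J₁₂} = 0. -/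

import Mathlib

namespace Paper
noncomputable section

/-- The κ-dependent cosine Cκ(x) = ∑ (−κ)^l x^{2l}/(2l)!. -/
def Ck (κ x : ℝ) : ℝ := ∑' l : ℕ, (-κ) ^ l * x ^ (2 * l) / (Nat.factorial (2 * l) : ℝ)

/-- The κ-dependent sine Sκ(x) = ∑ (−κ)^l x^{2l+1}/(2l+1)!. -/
def Sk (κ x : ℝ) : ℝ := ∑' l : ℕ, (-κ) ^ l * x ^ (2 * l + 1) / (Nat.factorial (2 * l + 1) : ℝ)

/-- The κ-dependent tangent Tκ(x) = Sκ(x)/Cκ(x). -/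
def Tk (κ x : ℝ) : ℝ := Sk κ x / Ck κ x

/-- Phase space ℝ³ × ℝ³ ≃ ℝ⁶ with canonical coordinates
`(r, θ, φ, p_r, p_θ, p_φ) = (x 0, x 1, x 2, x 3, x 4, x 5)`. -/
abbrev Pt := Fin 6 → ℝ

/-- Partial derivative in the i-th coordinate direction. -/
def pd (f : Pt → ℝ) (i : Fin 6) (x : Pt) : ℝ := fderiv ℝ f x (Pi.single i 1)

/-- Canonical Poisson bracket {f,g} = ∑_{q} (∂f/∂q ∂g/∂p_q − ∂g/∂q ∂f/∂p_q). -/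
def pb (f g : Pt → ℝ) (x : Pt) : ℝ :=
  ∑ i : Fin 3,
    (pd f ⟨i.1, by omega⟩ x * pd g ⟨i.1 + 3, by omega⟩ x
      - pd g ⟨i.1, by omega⟩ x * pd f ⟨i.1 + 3, by omega⟩ x)

/-- Gradient of a function on phase space, as a vector in ℝ⁶. -/
def grad (f : Pt → ℝ) (x : Pt) : Fin 6 → ℝ := fun i => pd f i x

/-- The open domain D where Sκ₁(r), Cκ₁(r), Sκ₂(θ), Cκ₂(θ), cos φ, sin φ are nonzero. -/
def D (κ₁ κ₂ : ℝ) : Set Pt :=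
  {x | Sk κ₁ (x 0) ≠ 0 ∧ Ck κ₁ (x 0) ≠ 0 ∧ Sk κ₂ (x 1) ≠ 0 ∧ Ck κ₂ (x 1) ≠ 0 ∧
       Real.cos (x 2) ≠ 0 ∧ Real.sin (x 2) ≠ 0}

/-- J₀₁ = Cκ₂(θ)p_r − (Sκ₂(θ)/Tκ₁(r))p_θ. -/
def J01 (κ₁ κ₂ : ℝ) (x : Pt) : ℝ :=
  Ck κ₂ (x 1) * x 3 - (Sk κ₂ (x 1) / Tk κ₁ (x 0)) * x 4

/-- J₀₂. -/
def J02 (κ₁ κ₂ : ℝ) (x : Pt) : ℝ :=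
  κ₂ * Sk κ₂ (x 1) * Real.cos (x 2) * x 3
    + (Ck κ₂ (x 1) * Real.cos (x 2) / Tk κ₁ (x 0)) * x 4
    - (Real.sin (x 2) / (Tk κ₁ (x 0) * Sk κ₂ (x 1))) * x 5

/-- J₀₃. -/
def J03 (κ₁ κ₂ : ℝ) (x : Pt) : ℝ :=
  κ₂ * Sk κ₂ (x 1) * Real.sin (x 2) * x 3
    + (Ck κ₂ (x 1) * Real.sin (x 2) / Tk κ₁ (x 0)) * x 4
    + (Real.cos (x 2) / (Tk κ₁ (x 0) * Sk κ₂ (x 1))) * x 5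

/-- J₁₂ = cos φ·p_θ − (sin φ/Tκ₂(θ))p_φ. -/
def J12 (κ₂ : ℝ) (x : Pt) : ℝ :=
  Real.cos (x 2) * x 4 - (Real.sin (x 2) / Tk κ₂ (x 1)) * x 5

/-- J₁₃ = sin φ·p_θ + (cos φ/Tκ₂(θ))p_φ. -/
def J13 (κ₂ : ℝ) (x : Pt) : ℝ :=
  Real.sin (x 2) * x 4 + (Real.cos (x 2) / Tk κ₂ (x 1)) * x 5

/-- J₂₃ = p_φ. -/
def J23 (x : Pt) : ℝ := x 5

/-- Kinetic energy T. -/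
def Tkin (κ₁ κ₂ : ℝ) (x : Pt) : ℝ :=
  (1 / 2) * ((x 3) ^ 2 + (x 4) ^ 2 / (κ₂ * Sk κ₁ (x 0) ^ 2)
    + (x 5) ^ 2 / (κ₂ * Sk κ₁ (x 0) ^ 2 * Sk κ₂ (x 1) ^ 2))

/-- The superintegrable potential U with arbitrary radial function F. -/
def U (κ₁ κ₂ : ℝ) (F : ℝ → ℝ) (β₁ β₂ β₃ : ℝ) (x : Pt) : ℝ :=
  F (x 0) + (1 / Sk κ₁ (x 0) ^ 2) *
    (β₁ / Ck κ₂ (x 1) ^ 2 + β₂ / (Sk κ₂ (x 1) ^ 2 * Real.cos (x 2) ^ 2)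
      + β₃ / (Sk κ₂ (x 1) ^ 2 * Real.sin (x 2) ^ 2))

/-- Integral I₁₂. -/
def I12 (κ₂ β₁ β₂ : ℝ) (x : Pt) : ℝ :=
  (Real.cos (x 2) * x 4 - (Real.sin (x 2) / Tk κ₂ (x 1)) * x 5) ^ 2
    + 2 * β₁ * κ₂ ^ 2 * Tk κ₂ (x 1) ^ 2 * Real.cos (x 2) ^ 2
    + 2 * β₂ * κ₂ / (Tk κ₂ (x 1) ^ 2 * Real.cos (x 2) ^ 2)

/-- Integral I₁₃. -/
def I13 (κ₂ β₁ β₃ : ℝ) (x : Pt) : ℝ :=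
  (Real.sin (x 2) * x 4 + (Real.cos (x 2) / Tk κ₂ (x 1)) * x 5) ^ 2
    + 2 * β₁ * κ₂ ^ 2 * Tk κ₂ (x 1) ^ 2 * Real.sin (x 2) ^ 2
    + 2 * β₃ * κ₂ / (Tk κ₂ (x 1) ^ 2 * Real.sin (x 2) ^ 2)

/-- Integral I₂₃. -/
def I23 (κ₂ β₂ β₃ : ℝ) (x : Pt) : ℝ :=
  (x 5) ^ 2 + 2 * β₂ * κ₂ * Real.tan (x 2) ^ 2 + 2 * β₃ * κ₂ / Real.tan (x 2) ^ 2

/-- Integral I₁₂₃. -/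
def I123 (κ₂ β₁ β₂ β₃ : ℝ) (x : Pt) : ℝ :=
  (x 4) ^ 2 + (x 5) ^ 2 / Sk κ₂ (x 1) ^ 2 + 2 * β₁ * κ₂ / Ck κ₂ (x 1) ^ 2
    + 2 * β₂ * κ₂ / (Sk κ₂ (x 1) ^ 2 * Real.cos (x 2) ^ 2)
    + 2 * β₃ * κ₂ / (Sk κ₂ (x 1) ^ 2 * Real.sin (x 2) ^ 2)

/-- The Smorodinsky–Winternitz Hamiltonian H^SW. -/
def HSW (κ₁ κ₂ β₀ β₁ β₂ β₃ : ℝ) (x : Pt) : ℝ :=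
  Tkin κ₁ κ₂ x + β₀ * Tk κ₁ (x 0) ^ 2 + (1 / Sk κ₁ (x 0) ^ 2) *
    (β₁ / Ck κ₂ (x 1) ^ 2 + β₂ / (Sk κ₂ (x 1) ^ 2 * Real.cos (x 2) ^ 2)
      + β₃ / (Sk κ₂ (x 1) ^ 2 * Real.sin (x 2) ^ 2))

/-- Integral I₀₁ of H^SW. -/
def I01 (κ₁ κ₂ β₀ β₁ : ℝ) (x : Pt) : ℝ :=
  J01 κ₁ κ₂ x ^ 2 + 2 * β₀ * Tk κ₁ (x 0) ^ 2 * Ck κ₂ (x 1) ^ 2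
    + 2 * β₁ / (Tk κ₁ (x 0) ^ 2 * Ck κ₂ (x 1) ^ 2)

/-- Integral I₀₂ of H^SW. -/
def I02 (κ₁ κ₂ β₀ β₂ : ℝ) (x : Pt) : ℝ :=
  J02 κ₁ κ₂ x ^ 2 + 2 * β₀ * κ₂ ^ 2 * Tk κ₁ (x 0) ^ 2 * Sk κ₂ (x 1) ^ 2 * Real.cos (x 2) ^ 2
    + 2 * β₂ * κ₂ / (Tk κ₁ (x 0) ^ 2 * Sk κ₂ (x 1) ^ 2 * Real.cos (x 2) ^ 2)

/-- Integral I₀₃ of H^SW. -/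
def I03 (κ₁ κ₂ β₀ β₃ : ℝ) (x : Pt) : ℝ :=
  J03 κ₁ κ₂ x ^ 2 + 2 * β₀ * κ₂ ^ 2 * Tk κ₁ (x 0) ^ 2 * Sk κ₂ (x 1) ^ 2 * Real.sin (x 2) ^ 2
    + 2 * β₃ * κ₂ / (Tk κ₁ (x 0) ^ 2 * Sk κ₂ (x 1) ^ 2 * Real.sin (x 2) ^ 2)

/-- Generalized Kepler–Coulomb Hamiltonian H^GKC₁ = T + U^GKC₁. -/
def HGKC1 (κ₁ κ₂ k β₂ β₃ : ℝ) (x : Pt) : ℝ :=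
  Tkin κ₁ κ₂ x - k / Tk κ₁ (x 0)
    + (1 / (Sk κ₁ (x 0) ^ 2 * Sk κ₂ (x 1) ^ 2)) *
        (β₂ / Real.cos (x 2) ^ 2 + β₃ / Real.sin (x 2) ^ 2)

/-- Generalized Kepler–Coulomb Hamiltonian H^GKC₂ = T + U^GKC₂. -/
def HGKC2 (κ₁ κ₂ k β₁ β₃ : ℝ) (x : Pt) : ℝ :=
  Tkin κ₁ κ₂ x - k / Tk κ₁ (x 0)
    + (1 / Sk κ₁ (x 0) ^ 2) *
        (β₁ / Ck κ₂ (x 1) ^ 2 + β₃ / (Sk κ₂ (x 1) ^ 2 * Real.sin (x 2) ^ 2))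

/-- Generalized Kepler–Coulomb Hamiltonian H^GKC₃ = T + U^GKC₃. -/
def HGKC3 (κ₁ κ₂ k β₁ β₂ : ℝ) (x : Pt) : ℝ :=
  Tkin κ₁ κ₂ x - k / Tk κ₁ (x 0)
    + (1 / Sk κ₁ (x 0) ^ 2) *
        (β₁ / Ck κ₂ (x 1) ^ 2 + β₂ / (Sk κ₂ (x 1) ^ 2 * Real.cos (x 2) ^ 2))

/-- The function L₁. -/
def L1 (κ₁ κ₂ k β₂ β₃ : ℝ) (x : Pt) : ℝ :=
  -(J02 κ₁ κ₂ x * J12 κ₂ x) - J03 κ₁ κ₂ x * J13 κ₂ x + k * κ₂ * Ck κ₂ (x 1)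
    - (2 * κ₂ * Ck κ₂ (x 1) / (Tk κ₁ (x 0) * Sk κ₂ (x 1) ^ 2)) *
        (β₂ / Real.cos (x 2) ^ 2 + β₃ / Real.sin (x 2) ^ 2)

/-- The function L₂. -/
def L2 (κ₁ κ₂ k β₁ β₃ : ℝ) (x : Pt) : ℝ :=
  J01 κ₁ κ₂ x * J12 κ₂ x - J03 κ₁ κ₂ x * J23 x + k * κ₂ * Sk κ₂ (x 1) * Real.cos (x 2)
    - (2 * κ₂ * Real.cos (x 2) / Tk κ₁ (x 0)) *
        (β₁ * Sk κ₂ (x 1) / Ck κ₂ (x 1) ^ 2 + β₃ / (Sk κ₂ (x 1) * Real.sin (x 2) ^ 2))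

/-- The function L₃. -/
def L3 (κ₁ κ₂ k β₁ β₂ : ℝ) (x : Pt) : ℝ :=
  J01 κ₁ κ₂ x * J13 κ₂ x + J02 κ₁ κ₂ x * J23 x + k * κ₂ * Sk κ₂ (x 1) * Real.sin (x 2)
    - (2 * κ₂ * Real.sin (x 2) / Tk κ₁ (x 0)) *
        (β₁ * Sk κ₂ (x 1) / Ck κ₂ (x 1) ^ 2 + β₂ / (Sk κ₂ (x 1) * Real.cos (x 2) ^ 2))

set_option maxHeartbeats 8000000
lemma exists_c {κ : ℝ} (hκ : κ ≠ 0) : ∃ c : ℂ, c ^ 2 = (κ : ℂ) ∧ c ≠ 0 := by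
  rcases le_or_gt 0 κ with h | h
  · have h0 : 0 < κ := lt_of_le_of_ne h (Ne.symm hκ)
    refine ⟨(Real.sqrt κ : ℂ), ?_, ?_⟩
    · norm_cast; rw [Real.sq_sqrt h]
    · exact_mod_cast Complex.ofReal_ne_zero.2 (Real.sqrt_ne_zero'.2 h0)
  · refine ⟨Complex.I * (Real.sqrt (-κ) : ℂ), ?_, ?_⟩
    · have : ((Real.sqrt (-κ) : ℝ) : ℂ) ^ 2 = ((-κ : ℝ) : ℂ) := by
        norm_cast; rw [Real.sq_sqrt (by linarith)]
      rw [mul_pow, Complex.I_sq, this]; push_cast; ring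
    · exact mul_ne_zero Complex.I_ne_zero
        (Complex.ofReal_ne_zero.2 (Real.sqrt_ne_zero'.2 (by linarith)))

lemma hasSum_Ck {κ : ℝ} {c : ℂ} (hc : c ^ 2 = (κ : ℂ)) (x : ℝ) :
    HasSum (fun l : ℕ => (-κ) ^ l * x ^ (2 * l) / (Nat.factorial (2 * l) : ℝ))
      (Complex.cos (c * x)).re := by
  have h := Complex.hasSum_cos (c * x)
  have he : ∀ l : ℕ, ((-1 : ℂ)) ^ l * (c * x) ^ (2 * l) / ((2 * l).factorial : ℂ)
      = (((-κ) ^ l * x ^ (2 * l) / ((2 * l).factorial : ℝ) : ℝ) : ℂ) := by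
    intro l
    have : (c * x) ^ (2 * l) = ((κ : ℂ)) ^ l * (x : ℂ) ^ (2 * l) := by
      rw [mul_pow, pow_mul, hc]
    rw [this]; push_cast; ring
  rw [funext he] at h
  have h2 := h.mapL Complex.reCLM
  simp only [Complex.reCLM_apply, Complex.ofReal_re] at h2
  exact h2

lemma hasSum_Sk {κ : ℝ} {c : ℂ} (hc : c ^ 2 = (κ : ℂ)) (hc0 : c ≠ 0) (x : ℝ) :
    HasSum (fun l : ℕ => (-κ) ^ l * x ^ (2 * l + 1) / (Nat.factorial (2 * l + 1) : ℝ))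
      (Complex.sin (c * x) / c).re := by
  have h := (Complex.hasSum_sin (c * x)).div_const c
  have he : ∀ l : ℕ, ((-1 : ℂ)) ^ l * (c * x) ^ (2 * l + 1) / ((2 * l + 1).factorial : ℂ) / c
      = (((-κ) ^ l * x ^ (2 * l + 1) / ((2 * l + 1).factorial : ℝ) : ℝ) : ℂ) := by
    intro l
    have : (c * x) ^ (2 * l + 1) = ((κ : ℂ)) ^ l * (x : ℂ) ^ (2 * l + 1) * c := by
      rw [mul_pow, pow_succ, pow_mul, hc]; ring
    rw [this]; field_simp; push_cast; ring_nf
  rw [funext he] at h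
  have h2 := h.mapL Complex.reCLM
  simp only [Complex.reCLM_apply, Complex.ofReal_re] at h2
  exact h2

lemma Ck_eq {κ : ℝ} {c : ℂ} (hc : c ^ 2 = (κ : ℂ)) (x : ℝ) :
    Ck κ x = (Complex.cos (c * x)).re := (hasSum_Ck hc x).tsum_eq

lemma Sk_eq {κ : ℝ} {c : ℂ} (hc : c ^ 2 = (κ : ℂ)) (hc0 : c ≠ 0) (x : ℝ) :
    Sk κ x = (Complex.sin (c * x) / c).re := (hasSum_Sk hc hc0 x).tsum_eq

lemma Ck_im {κ : ℝ} {c : ℂ} (hc : c ^ 2 = (κ : ℂ)) (x : ℝ) :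
    (Complex.cos (c * x)).im = 0 := by
  have h := Complex.hasSum_cos (c * x)
  have he : ∀ l : ℕ, ((-1 : ℂ)) ^ l * (c * x) ^ (2 * l) / ((2 * l).factorial : ℂ)
      = (((-κ) ^ l * x ^ (2 * l) / ((2 * l).factorial : ℝ) : ℝ) : ℂ) := by
    intro l
    have : (c * x) ^ (2 * l) = ((κ : ℂ)) ^ l * (x : ℂ) ^ (2 * l) := by
      rw [mul_pow, pow_mul, hc]
    rw [this]; push_cast; ring
  rw [funext he] at h
  have h2 := h.mapL Complex.imCLM
  simp only [Complex.imCLM_apply, Complex.ofReal_im] at h2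
  exact h2.unique hasSum_zero

lemma Sk_im {κ : ℝ} {c : ℂ} (hc : c ^ 2 = (κ : ℂ)) (hc0 : c ≠ 0) (x : ℝ) :
    (Complex.sin (c * x) / c).im = 0 := by
  have h := (Complex.hasSum_sin (c * x)).div_const c
  have he : ∀ l : ℕ, ((-1 : ℂ)) ^ l * (c * x) ^ (2 * l + 1) / ((2 * l + 1).factorial : ℂ) / c
      = (((-κ) ^ l * x ^ (2 * l + 1) / ((2 * l + 1).factorial : ℝ) : ℝ) : ℂ) := by
    intro l
    have : (c * x) ^ (2 * l + 1) = ((κ : ℂ)) ^ l * (x : ℂ) ^ (2 * l + 1) * c := by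
      rw [mul_pow, pow_succ, pow_mul, hc]; ring
    rw [this]; field_simp; push_cast; ring_nf
  rw [funext he] at h
  have h2 := h.mapL Complex.imCLM
  simp only [Complex.imCLM_apply, Complex.ofReal_im] at h2
  exact h2.unique hasSum_zero

lemma Ck_eqC {κ : ℝ} {c : ℂ} (hc : c ^ 2 = (κ : ℂ)) (x : ℝ) :
    (Ck κ x : ℂ) = Complex.cos (c * x) :=
  Complex.ext (by simp [Ck_eq hc]) (by simp [Ck_im hc])

lemma Sk_eqC {κ : ℝ} {c : ℂ} (hc : c ^ 2 = (κ : ℂ)) (hc0 : c ≠ 0) (x : ℝ) :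
    (Sk κ x : ℂ) = Complex.sin (c * x) / c :=
  Complex.ext (by simp [Sk_eq hc hc0]) (by simp [Sk_im hc hc0])

lemma Sk_zero (x : ℝ) : Sk 0 x = x := by
  rw [Sk, tsum_eq_single 0 (by intro b hb; simp [zero_pow hb])]; simp

lemma Ck_zero (x : ℝ) : Ck 0 x = 1 := by
  rw [Ck, tsum_eq_single 0 (by intro b hb; simp [zero_pow hb])]; simp

lemma Ck_sq_add (κ x : ℝ) : Ck κ x ^ 2 + κ * Sk κ x ^ 2 = 1 := by
  rcases eq_or_ne κ 0 with rfl | hκ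
  · simp [Ck_zero]
  obtain ⟨c, hc, hc0⟩ := exists_c hκ
  have : ((Ck κ x ^ 2 + κ * Sk κ x ^ 2 : ℝ) : ℂ) = 1 := by
    push_cast
    rw [Ck_eqC hc, Sk_eqC hc hc0, ← hc]
    rw [div_pow, show c ^ 2 * (Complex.sin (c * (x:ℂ)) ^ 2 / c ^ 2)
      = Complex.sin (c * (x:ℂ)) ^ 2 from by field_simp]
    exact Complex.cos_sq_add_sin_sq _
  exact_mod_cast this

lemma hasDerivAt_Sk (κ x : ℝ) : HasDerivAt (Sk κ) (Ck κ x) x := by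
  rcases eq_or_ne κ 0 with rfl | hκ
  · rw [funext Sk_zero, Ck_zero]; exact hasDerivAt_id x
  obtain ⟨c, hc, hc0⟩ := exists_c hκ
  have hlin : HasDerivAt (fun z : ℂ => c * z) c (x : ℂ) := by
    simpa using (hasDerivAt_id (x : ℂ)).const_mul c
  have h : HasDerivAt (fun z : ℂ => Complex.sin (c * z) / c)
      (Complex.cos (c * x) * c / c) (x : ℂ) :=
    ((Complex.hasDerivAt_sin (c * x)).comp (x : ℂ) hlin).div_const c
  rw [mul_div_cancel_right₀ _ hc0] at h
  have h2 := h.real_of_complex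
  rw [funext (Sk_eq hc hc0), Ck_eq hc]
  exact h2

lemma hasDerivAt_Ck (κ x : ℝ) : HasDerivAt (Ck κ) (-(κ * Sk κ x)) x := by
  rcases eq_or_ne κ 0 with rfl | hκ
  · rw [funext Ck_zero]; simpa using hasDerivAt_const x (1:ℝ)
  obtain ⟨c, hc, hc0⟩ := exists_c hκ
  have hlin : HasDerivAt (fun z : ℂ => c * z) c (x : ℂ) := by
    simpa using (hasDerivAt_id (x : ℂ)).const_mul c
  have h : HasDerivAt (fun z : ℂ => Complex.cos (c * z))
      (-Complex.sin (c * x) * c) (x : ℂ) :=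
    (Complex.hasDerivAt_cos (c * x)).comp (x : ℂ) hlin
  have hval : -Complex.sin (c * x) * c = ((-κ : ℝ) : ℂ) * (Complex.sin (c * x) / c) := by
    push_cast; rw [← hc]; field_simp
  rw [hval] at h
  have h2 := h.real_of_complex
  rw [Complex.re_ofReal_mul] at h2
  rw [funext (Ck_eq hc)]
  have : -κ * (Complex.sin (c * ↑x) / c).re = -(κ * Sk κ x) := by
    rw [Sk_eq hc hc0]; ring
  rw [this] at h2
  exact h2

lemma pb_expand (f g : Pt → ℝ) (x : Pt) : pb f g x =
    pd f 0 x * pd g 3 x - pd g 0 x * pd f 3 x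
    + (pd f 1 x * pd g 4 x - pd g 1 x * pd f 4 x)
    + (pd f 2 x * pd g 5 x - pd g 2 x * pd f 5 x) := by
  simp [pb, Fin.sum_univ_three]
  ring

/-- the geodesic polar realization satisfies the commutation
relations of so_{κ₁,κ₂}(4) with respect to the canonical Poisson bracket,
at every point of D. -/
theorem so_kappa_commutation_relations (κ₁ κ₂ : ℝ) (hκ₂ : κ₂ ≠ 0) :
    ∀ x ∈ D κ₁ κ₂,
      pb (J12 κ₂) (J13 κ₂) x = κ₂ * J23 x ∧
      pb (J12 κ₂) J23 x = -J13 κ₂ x ∧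
      pb (J13 κ₂) J23 x = J12 κ₂ x ∧
      pb (J12 κ₂) (J01 κ₁ κ₂) x = J02 κ₁ κ₂ x ∧
      pb (J13 κ₂) (J01 κ₁ κ₂) x = J03 κ₁ κ₂ x ∧
      pb J23 (J02 κ₁ κ₂) x = J03 κ₁ κ₂ x ∧
      pb (J12 κ₂) (J02 κ₁ κ₂) x = -(κ₂ * J01 κ₁ κ₂ x) ∧
      pb (J13 κ₂) (J03 κ₁ κ₂) x = -(κ₂ * J01 κ₁ κ₂ x) ∧
      pb J23 (J03 κ₁ κ₂) x = -J02 κ₁ κ₂ x ∧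
      pb (J01 κ₁ κ₂) (J02 κ₁ κ₂) x = κ₁ * J12 κ₂ x ∧
      pb (J01 κ₁ κ₂) (J03 κ₁ κ₂) x = κ₁ * J13 κ₂ x ∧
      pb (J02 κ₁ κ₂) (J03 κ₁ κ₂) x = κ₁ * κ₂ * J23 x ∧
      pb (J01 κ₁ κ₂) J23 x = 0 ∧
      pb (J02 κ₁ κ₂) (J13 κ₂) x = 0 ∧
      pb (J03 κ₁ κ₂) (J12 κ₂) x = 0 := by
  rintro x ⟨hs1, hc1, hs2, hc2, hcf, hsf⟩
  have pyth1 := Ck_sq_add κ₁ (x 0)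
  have pyth2 := Ck_sq_add κ₂ (x 1)
  have pythf := Real.sin_sq_add_cos_sq (x 2)
  have hz1 : Sk κ₁ (x 0) * (Sk κ₁ (x 0))⁻¹ = 1 := mul_inv_cancel₀ hs1
  have hz2 : Sk κ₂ (x 1) * (Sk κ₂ (x 1))⁻¹ = 1 := mul_inv_cancel₀ hs2
  have hT1 : Tk κ₁ (x 0) ≠ 0 := div_ne_zero hs1 hc1
  have hT2 : Tk κ₂ (x 1) ≠ 0 := div_ne_zero hs2 hc2
  have P0 : HasFDerivAt (fun y : Pt => y 0) (ContinuousLinearMap.proj 0 : Pt →L[ℝ] ℝ) x :=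
    (ContinuousLinearMap.proj (0:Fin 6) : Pt →L[ℝ] ℝ).hasFDerivAt
  have P1 : HasFDerivAt (fun y : Pt => y 1) (ContinuousLinearMap.proj 1 : Pt →L[ℝ] ℝ) x :=
    (ContinuousLinearMap.proj (1:Fin 6) : Pt →L[ℝ] ℝ).hasFDerivAt
  have P2 : HasFDerivAt (fun y : Pt => y 2) (ContinuousLinearMap.proj 2 : Pt →L[ℝ] ℝ) x :=
    (ContinuousLinearMap.proj (2:Fin 6) : Pt →L[ℝ] ℝ).hasFDerivAt
  have P3 : HasFDerivAt (fun y : Pt => y 3) (ContinuousLinearMap.proj 3 : Pt →L[ℝ] ℝ) x :=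
    (ContinuousLinearMap.proj (3:Fin 6) : Pt →L[ℝ] ℝ).hasFDerivAt
  have P4 : HasFDerivAt (fun y : Pt => y 4) (ContinuousLinearMap.proj 4 : Pt →L[ℝ] ℝ) x :=
    (ContinuousLinearMap.proj (4:Fin 6) : Pt →L[ℝ] ℝ).hasFDerivAt
  have P5 : HasFDerivAt (fun y : Pt => y 5) (ContinuousLinearMap.proj 5 : Pt →L[ℝ] ℝ) x :=
    (ContinuousLinearMap.proj (5:Fin 6) : Pt →L[ℝ] ℝ).hasFDerivAt
  have hu1 : HasDerivAt (fun r => 1 / Tk κ₁ r) (-(1 / Sk κ₁ (x 0) ^ 2)) (x 0) := by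
    have hd := (hasDerivAt_const (x 0) (1:ℝ)).div
      ((hasDerivAt_Sk κ₁ (x 0)).div (hasDerivAt_Ck κ₁ (x 0)) hc1) hT1
    refine hd.congr_deriv ?_
    simp only [Pi.div_apply]
    field_simp
    linear_combination (-1) * pyth1
  have hu2 : HasDerivAt (fun r => 1 / Tk κ₂ r) (-(1 / Sk κ₂ (x 1) ^ 2)) (x 1) := by
    have hd := (hasDerivAt_const (x 1) (1:ℝ)).div
      ((hasDerivAt_Sk κ₂ (x 1)).div (hasDerivAt_Ck κ₂ (x 1)) hc2) hT2
    refine hd.congr_deriv ?_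
    simp only [Pi.div_apply]
    field_simp
    linear_combination (-1) * pyth2
  have hq2 : HasDerivAt (fun t => 1 / Sk κ₂ t) (-(Ck κ₂ (x 1) / Sk κ₂ (x 1) ^ 2)) (x 1) := by
    have hd := (hasDerivAt_const (x 1) (1:ℝ)).div (hasDerivAt_Sk κ₂ (x 1)) hs2
    refine hd.congr_deriv ?_
    ring
  have hk2s : HasDerivAt (fun t => κ₂ * Sk κ₂ t) (κ₂ * Ck κ₂ (x 1)) (x 1) :=
    (hasDerivAt_Sk κ₂ (x 1)).const_mul κ₂
  have hC2f : HasFDerivAt (fun y : Pt => Ck κ₂ (y 1))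
      ((-(κ₂ * Sk κ₂ (x 1))) • (ContinuousLinearMap.proj 1 : Pt →L[ℝ] ℝ)) x :=
    by have h := (hasDerivAt_Ck κ₂ (x 1)).comp_hasFDerivAt x P1; exact h
  have hS2f : HasFDerivAt (fun y : Pt => Sk κ₂ (y 1))
      ((Ck κ₂ (x 1)) • (ContinuousLinearMap.proj 1 : Pt →L[ℝ] ℝ)) x :=
    by have h := (hasDerivAt_Sk κ₂ (x 1)).comp_hasFDerivAt x P1; exact h
  have hk2S2f : HasFDerivAt (fun y : Pt => κ₂ * Sk κ₂ (y 1))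
      ((κ₂ * Ck κ₂ (x 1)) • (ContinuousLinearMap.proj 1 : Pt →L[ℝ] ℝ)) x :=
    by have h := hk2s.comp_hasFDerivAt x P1; exact h
  have hAf : HasFDerivAt (fun y : Pt => 1 / Tk κ₁ (y 0))
      ((-(1 / Sk κ₁ (x 0) ^ 2)) • (ContinuousLinearMap.proj 0 : Pt →L[ℝ] ℝ)) x :=
    by have h := hu1.comp_hasFDerivAt x P0; exact h
  have hBf : HasFDerivAt (fun y : Pt => 1 / Tk κ₂ (y 1))
      ((-(1 / Sk κ₂ (x 1) ^ 2)) • (ContinuousLinearMap.proj 1 : Pt →L[ℝ] ℝ)) x :=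
    by have h := hu2.comp_hasFDerivAt x P1; exact h
  have hIS2f : HasFDerivAt (fun y : Pt => 1 / Sk κ₂ (y 1))
      ((-(Ck κ₂ (x 1) / Sk κ₂ (x 1) ^ 2)) • (ContinuousLinearMap.proj 1 : Pt →L[ℝ] ℝ)) x :=
    by have h := hq2.comp_hasFDerivAt x P1; exact h
  have hcosf : HasFDerivAt (fun y : Pt => Real.cos (y 2))
      ((-Real.sin (x 2)) • (ContinuousLinearMap.proj 2 : Pt →L[ℝ] ℝ)) x :=
    by have h := (Real.hasDerivAt_cos (x 2)).comp_hasFDerivAt x P2; exact h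
  have hsinf : HasFDerivAt (fun y : Pt => Real.sin (y 2))
      ((Real.cos (x 2)) • (ContinuousLinearMap.proj 2 : Pt →L[ℝ] ℝ)) x :=
    by have h := (Real.hasDerivAt_sin (x 2)).comp_hasFDerivAt x P2; exact h
  have e01 : J01 κ₁ κ₂ = fun y : Pt =>
      Ck κ₂ (y 1) * y 3 - 1 / Tk κ₁ (y 0) * Sk κ₂ (y 1) * y 4 := by
    funext y; rw [J01]; ring
  have h01 : HasFDerivAt (fun y : Pt =>
      Ck κ₂ (y 1) * y 3 - 1 / Tk κ₁ (y 0) * Sk κ₂ (y 1) * y 4) _ x :=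
    (hC2f.mul P3).sub ((hAf.mul hS2f).mul P4)
  have e02 : J02 κ₁ κ₂ = fun y : Pt =>
      κ₂ * Sk κ₂ (y 1) * Real.cos (y 2) * y 3
      + 1 / Tk κ₁ (y 0) * Ck κ₂ (y 1) * Real.cos (y 2) * y 4
      - 1 / Tk κ₁ (y 0) * (1 / Sk κ₂ (y 1)) * Real.sin (y 2) * y 5 := by
    funext y; rw [J02]; ring
  have h02 : HasFDerivAt (fun y : Pt =>
      κ₂ * Sk κ₂ (y 1) * Real.cos (y 2) * y 3
      + 1 / Tk κ₁ (y 0) * Ck κ₂ (y 1) * Real.cos (y 2) * y 4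
      - 1 / Tk κ₁ (y 0) * (1 / Sk κ₂ (y 1)) * Real.sin (y 2) * y 5) _ x :=
    (((hk2S2f.mul hcosf).mul P3).add
    (((hAf.mul hC2f).mul hcosf).mul P4)).sub (((hAf.mul hIS2f).mul hsinf).mul P5)
  have e03 : J03 κ₁ κ₂ = fun y : Pt =>
      κ₂ * Sk κ₂ (y 1) * Real.sin (y 2) * y 3
      + 1 / Tk κ₁ (y 0) * Ck κ₂ (y 1) * Real.sin (y 2) * y 4
      + 1 / Tk κ₁ (y 0) * (1 / Sk κ₂ (y 1)) * Real.cos (y 2) * y 5 := by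
    funext y; rw [J03]; ring
  have h03 : HasFDerivAt (fun y : Pt =>
      κ₂ * Sk κ₂ (y 1) * Real.sin (y 2) * y 3
      + 1 / Tk κ₁ (y 0) * Ck κ₂ (y 1) * Real.sin (y 2) * y 4
      + 1 / Tk κ₁ (y 0) * (1 / Sk κ₂ (y 1)) * Real.cos (y 2) * y 5) _ x :=
    (((hk2S2f.mul hsinf).mul P3).add
    (((hAf.mul hC2f).mul hsinf).mul P4)).add (((hAf.mul hIS2f).mul hcosf).mul P5)
  have e12 : J12 κ₂ = fun y : Pt =>
      Real.cos (y 2) * y 4 - 1 / Tk κ₂ (y 1) * Real.sin (y 2) * y 5 := by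
    funext y; rw [J12]; ring
  have h12 : HasFDerivAt (fun y : Pt =>
      Real.cos (y 2) * y 4 - 1 / Tk κ₂ (y 1) * Real.sin (y 2) * y 5) _ x :=
    (hcosf.mul P4).sub ((hBf.mul hsinf).mul P5)
  have e13 : J13 κ₂ = fun y : Pt =>
      Real.sin (y 2) * y 4 + 1 / Tk κ₂ (y 1) * Real.cos (y 2) * y 5 := by
    funext y; rw [J13]; ring
  have h13 : HasFDerivAt (fun y : Pt =>
      Real.sin (y 2) * y 4 + 1 / Tk κ₂ (y 1) * Real.cos (y 2) * y 5) _ x :=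
    (hsinf.mul P4).add ((hBf.mul hcosf).mul P5)
  have e23 : J23 = fun y : Pt => y 5 := rfl
  have h23 := P5
  have d01_0 : pd (J01 κ₁ κ₂) 0 x = (Sk κ₁ (x 0))⁻¹^2*Sk κ₂ (x 1)*x 4 := by
    rw [pd, e01, h01.fderiv]
    simp [Pi.single_apply, Tk, one_div_div]
    try ring
    try tauto
  have d01_1 : pd (J01 κ₁ κ₂) 1 x = -(κ₂*Sk κ₂ (x 1))*x 3 - Ck κ₁ (x 0)*(Sk κ₁ (x 0))⁻¹*Ck κ₂ (x 1)*x 4 := by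
    rw [pd, e01, h01.fderiv]
    simp [Pi.single_apply, Tk, one_div_div]
    try ring
    try tauto
  have d01_2 : pd (J01 κ₁ κ₂) 2 x = 0 := by
    rw [pd, e01, h01.fderiv]
    simp [Pi.single_apply, Tk, one_div_div]
    try ring
    try tauto
  have d01_3 : pd (J01 κ₁ κ₂) 3 x = Ck κ₂ (x 1) := by
    rw [pd, e01, h01.fderiv]
    simp [Pi.single_apply, Tk, one_div_div]
    try ring
    try tauto
  have d01_4 : pd (J01 κ₁ κ₂) 4 x = -(Ck κ₁ (x 0)*(Sk κ₁ (x 0))⁻¹*Sk κ₂ (x 1)) := by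
    rw [pd, e01, h01.fderiv]
    simp [Pi.single_apply, Tk, one_div_div]
    try ring
    try tauto
  have d01_5 : pd (J01 κ₁ κ₂) 5 x = 0 := by
    rw [pd, e01, h01.fderiv]
    simp [Pi.single_apply, Tk, one_div_div]
    try ring
    try tauto
  have d02_0 : pd (J02 κ₁ κ₂) 0 x = -((Sk κ₁ (x 0))⁻¹^2)*Ck κ₂ (x 1)*Real.cos (x 2)*x 4 + (Sk κ₁ (x 0))⁻¹^2*(Sk κ₂ (x 1))⁻¹*Real.sin (x 2)*x 5 := by
    rw [pd, e02, h02.fderiv]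
    simp [Pi.single_apply, Tk, one_div_div]
    try ring
    try tauto
  have d02_1 : pd (J02 κ₁ κ₂) 1 x = κ₂*Ck κ₂ (x 1)*Real.cos (x 2)*x 3 - κ₂*Sk κ₂ (x 1)*Ck κ₁ (x 0)*(Sk κ₁ (x 0))⁻¹*Real.cos (x 2)*x 4 + Ck κ₁ (x 0)*(Sk κ₁ (x 0))⁻¹*Ck κ₂ (x 1)*(Sk κ₂ (x 1))⁻¹^2*Real.sin (x 2)*x 5 := by
    rw [pd, e02, h02.fderiv]
    simp [Pi.single_apply, Tk, one_div_div]
    try ring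
    try tauto
  have d02_2 : pd (J02 κ₁ κ₂) 2 x = -(κ₂*Sk κ₂ (x 1))*Real.sin (x 2)*x 3 - Ck κ₁ (x 0)*(Sk κ₁ (x 0))⁻¹*Ck κ₂ (x 1)*Real.sin (x 2)*x 4 - Ck κ₁ (x 0)*(Sk κ₁ (x 0))⁻¹*(Sk κ₂ (x 1))⁻¹*Real.cos (x 2)*x 5 := by
    rw [pd, e02, h02.fderiv]
    simp [Pi.single_apply, Tk, one_div_div]
    try ring
    try tauto
  have d02_3 : pd (J02 κ₁ κ₂) 3 x = κ₂*Sk κ₂ (x 1)*Real.cos (x 2) := by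
    rw [pd, e02, h02.fderiv]
    simp [Pi.single_apply, Tk, one_div_div]
    try ring
    try tauto
  have d02_4 : pd (J02 κ₁ κ₂) 4 x = Ck κ₁ (x 0)*(Sk κ₁ (x 0))⁻¹*Ck κ₂ (x 1)*Real.cos (x 2) := by
    rw [pd, e02, h02.fderiv]
    simp [Pi.single_apply, Tk, one_div_div]
    try ring
    try tauto
  have d02_5 : pd (J02 κ₁ κ₂) 5 x = -(Ck κ₁ (x 0)*(Sk κ₁ (x 0))⁻¹*(Sk κ₂ (x 1))⁻¹*Real.sin (x 2)) := by
    rw [pd, e02, h02.fderiv]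
    simp [Pi.single_apply, Tk, one_div_div]
    try ring
    try tauto
  have d03_0 : pd (J03 κ₁ κ₂) 0 x = -((Sk κ₁ (x 0))⁻¹^2)*Ck κ₂ (x 1)*Real.sin (x 2)*x 4 - (Sk κ₁ (x 0))⁻¹^2*(Sk κ₂ (x 1))⁻¹*Real.cos (x 2)*x 5 := by
    rw [pd, e03, h03.fderiv]
    simp [Pi.single_apply, Tk, one_div_div]
    try ring
    try tauto
  have d03_1 : pd (J03 κ₁ κ₂) 1 x = κ₂*Ck κ₂ (x 1)*Real.sin (x 2)*x 3 - κ₂*Sk κ₂ (x 1)*Ck κ₁ (x 0)*(Sk κ₁ (x 0))⁻¹*Real.sin (x 2)*x 4 - Ck κ₁ (x 0)*(Sk κ₁ (x 0))⁻¹*Ck κ₂ (x 1)*(Sk κ₂ (x 1))⁻¹^2*Real.cos (x 2)*x 5 := by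
    rw [pd, e03, h03.fderiv]
    simp [Pi.single_apply, Tk, one_div_div]
    try ring
    try tauto
  have d03_2 : pd (J03 κ₁ κ₂) 2 x = κ₂*Sk κ₂ (x 1)*Real.cos (x 2)*x 3 + Ck κ₁ (x 0)*(Sk κ₁ (x 0))⁻¹*Ck κ₂ (x 1)*Real.cos (x 2)*x 4 - Ck κ₁ (x 0)*(Sk κ₁ (x 0))⁻¹*(Sk κ₂ (x 1))⁻¹*Real.sin (x 2)*x 5 := by
    rw [pd, e03, h03.fderiv]
    simp [Pi.single_apply, Tk, one_div_div]
    try ring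
    try tauto
  have d03_3 : pd (J03 κ₁ κ₂) 3 x = κ₂*Sk κ₂ (x 1)*Real.sin (x 2) := by
    rw [pd, e03, h03.fderiv]
    simp [Pi.single_apply, Tk, one_div_div]
    try ring
    try tauto
  have d03_4 : pd (J03 κ₁ κ₂) 4 x = Ck κ₁ (x 0)*(Sk κ₁ (x 0))⁻¹*Ck κ₂ (x 1)*Real.sin (x 2) := by
    rw [pd, e03, h03.fderiv]
    simp [Pi.single_apply, Tk, one_div_div]
    try ring
    try tauto
  have d03_5 : pd (J03 κ₁ κ₂) 5 x = Ck κ₁ (x 0)*(Sk κ₁ (x 0))⁻¹*(Sk κ₂ (x 1))⁻¹*Real.cos (x 2) := by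
    rw [pd, e03, h03.fderiv]
    simp [Pi.single_apply, Tk, one_div_div]
    try ring
    try tauto
  have d12_0 : pd (J12 κ₂) 0 x = 0 := by
    rw [pd, e12, h12.fderiv]
    simp [Pi.single_apply, Tk, one_div_div]
    try ring
    try tauto
  have d12_1 : pd (J12 κ₂) 1 x = (Sk κ₂ (x 1))⁻¹^2*Real.sin (x 2)*x 5 := by
    rw [pd, e12, h12.fderiv]
    simp [Pi.single_apply, Tk, one_div_div]
    try ring
    try tauto
  have d12_2 : pd (J12 κ₂) 2 x = -(Real.sin (x 2)*x 4) - Ck κ₂ (x 1)*(Sk κ₂ (x 1))⁻¹*Real.cos (x 2)*x 5 := by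
    rw [pd, e12, h12.fderiv]
    simp [Pi.single_apply, Tk, one_div_div]
    try ring
    try tauto
  have d12_3 : pd (J12 κ₂) 3 x = 0 := by
    rw [pd, e12, h12.fderiv]
    simp [Pi.single_apply, Tk, one_div_div]
    try ring
    try tauto
  have d12_4 : pd (J12 κ₂) 4 x = Real.cos (x 2) := by
    rw [pd, e12, h12.fderiv]
    simp [Pi.single_apply, Tk, one_div_div]
    try ring
    try tauto
  have d12_5 : pd (J12 κ₂) 5 x = -(Ck κ₂ (x 1)*(Sk κ₂ (x 1))⁻¹*Real.sin (x 2)) := by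
    rw [pd, e12, h12.fderiv]
    simp [Pi.single_apply, Tk, one_div_div]
    try ring
    try tauto
  have d13_0 : pd (J13 κ₂) 0 x = 0 := by
    rw [pd, e13, h13.fderiv]
    simp [Pi.single_apply, Tk, one_div_div]
    try ring
    try tauto
  have d13_1 : pd (J13 κ₂) 1 x = -((Sk κ₂ (x 1))⁻¹^2)*Real.cos (x 2)*x 5 := by
    rw [pd, e13, h13.fderiv]
    simp [Pi.single_apply, Tk, one_div_div]
    try ring
    try tauto
  have d13_2 : pd (J13 κ₂) 2 x = Real.cos (x 2)*x 4 - Ck κ₂ (x 1)*(Sk κ₂ (x 1))⁻¹*Real.sin (x 2)*x 5 := by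
    rw [pd, e13, h13.fderiv]
    simp [Pi.single_apply, Tk, one_div_div]
    try ring
    try tauto
  have d13_3 : pd (J13 κ₂) 3 x = 0 := by
    rw [pd, e13, h13.fderiv]
    simp [Pi.single_apply, Tk, one_div_div]
    try ring
    try tauto
  have d13_4 : pd (J13 κ₂) 4 x = Real.sin (x 2) := by
    rw [pd, e13, h13.fderiv]
    simp [Pi.single_apply, Tk, one_div_div]
    try ring
    try tauto
  have d13_5 : pd (J13 κ₂) 5 x = Ck κ₂ (x 1)*(Sk κ₂ (x 1))⁻¹*Real.cos (x 2) := by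
    rw [pd, e13, h13.fderiv]
    simp [Pi.single_apply, Tk, one_div_div]
    try ring
    try tauto
  have d23_0 : pd (J23) 0 x = 0 := by
    rw [pd, e23, h23.fderiv]
    simp [Pi.single_apply, Tk, one_div_div]
    try ring
    try tauto
  have d23_1 : pd (J23) 1 x = 0 := by
    rw [pd, e23, h23.fderiv]
    simp [Pi.single_apply, Tk, one_div_div]
    try ring
    try tauto
  have d23_2 : pd (J23) 2 x = 0 := by
    rw [pd, e23, h23.fderiv]
    simp [Pi.single_apply, Tk, one_div_div]
    try ring
    try tauto
  have d23_3 : pd (J23) 3 x = 0 := by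
    rw [pd, e23, h23.fderiv]
    simp [Pi.single_apply, Tk, one_div_div]
    try ring
    try tauto
  have d23_4 : pd (J23) 4 x = 0 := by
    rw [pd, e23, h23.fderiv]
    simp [Pi.single_apply, Tk, one_div_div]
    try ring
    try tauto
  have d23_5 : pd (J23) 5 x = 1 := by
    rw [pd, e23, h23.fderiv]
    simp [Pi.single_apply, Tk, one_div_div]
    try ring
    try tauto
  have r01 : J01 κ₁ κ₂ x = Ck κ₂ (x 1)*x 3 - Ck κ₁ (x 0)*(Sk κ₁ (x 0))⁻¹*Sk κ₂ (x 1)*x 4 := by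
    simp only [J01, Tk, div_div_eq_mul_div, div_mul_eq_div_div]; ring
  have r02 : J02 κ₁ κ₂ x = κ₂*Sk κ₂ (x 1)*Real.cos (x 2)*x 3 + Ck κ₁ (x 0)*(Sk κ₁ (x 0))⁻¹*Ck κ₂ (x 1)*Real.cos (x 2)*x 4 - Ck κ₁ (x 0)*(Sk κ₁ (x 0))⁻¹*(Sk κ₂ (x 1))⁻¹*Real.sin (x 2)*x 5 := by
    simp only [J02, Tk, div_mul_eq_div_div, div_div_eq_mul_div]; ring
  have r03 : J03 κ₁ κ₂ x = κ₂*Sk κ₂ (x 1)*Real.sin (x 2)*x 3 + Ck κ₁ (x 0)*(Sk κ₁ (x 0))⁻¹*Ck κ₂ (x 1)*Real.sin (x 2)*x 4 + Ck κ₁ (x 0)*(Sk κ₁ (x 0))⁻¹*(Sk κ₂ (x 1))⁻¹*Real.cos (x 2)*x 5 := by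
    simp only [J03, Tk, div_mul_eq_div_div, div_div_eq_mul_div]; ring
  have r12 : J12 κ₂ x = Real.cos (x 2)*x 4 - Ck κ₂ (x 1)*(Sk κ₂ (x 1))⁻¹*Real.sin (x 2)*x 5 := by
    simp only [J12, Tk, div_div_eq_mul_div]; ring
  have r13 : J13 κ₂ x = Real.sin (x 2)*x 4 + Ck κ₂ (x 1)*(Sk κ₂ (x 1))⁻¹*Real.cos (x 2)*x 5 := by
    simp only [J13, Tk, div_div_eq_mul_div]; ring
  have r23 : J23 x = x 5 := rfl
  refine ⟨?_, ?_, ?_, ?_, ?_, ?_, ?_, ?_, ?_, ?_, ?_, ?_, ?_, ?_, ?_⟩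
  · -- relation 1
    rw [pb_expand, d12_0, d12_1, d12_2, d12_3, d12_4, d12_5, d13_0, d13_1, d13_2, d13_3, d13_4, d13_5, r23]
    linear_combination ((-1:ℝ) * (Sk κ₂ (x 1))⁻¹^2 * Real.sin (x 2)^2 * x 5 + (-1:ℝ) * (Sk κ₂ (x 1))⁻¹^2 * Real.cos (x 2)^2 * x 5) * pyth2 + ((1:ℝ) * Sk κ₂ (x 1)^2 * (Sk κ₂ (x 1))⁻¹^2 * x 5 * κ₂) * pythf + ((1:ℝ) * x 5 * κ₂ + (1:ℝ) * Sk κ₂ (x 1) * (Sk κ₂ (x 1))⁻¹ * x 5 * κ₂) * hz2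
  · -- relation 2
    rw [pb_expand, d12_0, d12_1, d12_2, d12_3, d12_4, d12_5, d23_0, d23_1, d23_2, d23_3, d23_4, d23_5, r13]
    linear_combination (0:ℝ) * pyth1
  · -- relation 3
    rw [pb_expand, d13_0, d13_1, d13_2, d13_3, d13_4, d13_5, d23_0, d23_1, d23_2, d23_3, d23_4, d23_5, r12]
    linear_combination (0:ℝ) * pyth1
  · -- relation 4
    rw [pb_expand, d12_0, d12_1, d12_2, d12_3, d12_4, d12_5, d01_0, d01_1, d01_2, d01_3, d01_4, d01_5, r02]
    linear_combination ((-1:ℝ) * Ck κ₁ (x 0) * (Sk κ₁ (x 0))⁻¹ * (Sk κ₂ (x 1))⁻¹ * Real.sin (x 2) * x 5) * hz2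
  · -- relation 5
    rw [pb_expand, d13_0, d13_1, d13_2, d13_3, d13_4, d13_5, d01_0, d01_1, d01_2, d01_3, d01_4, d01_5, r03]
    linear_combination ((1:ℝ) * Ck κ₁ (x 0) * (Sk κ₁ (x 0))⁻¹ * (Sk κ₂ (x 1))⁻¹ * Real.cos (x 2) * x 5) * hz2
  · -- relation 6
    rw [pb_expand, d23_0, d23_1, d23_2, d23_3, d23_4, d23_5, d02_0, d02_1, d02_2, d02_3, d02_4, d02_5, r03]
    linear_combination (0:ℝ) * pyth1
  · -- relation 7
    rw [pb_expand, d12_0, d12_1, d12_2, d12_3, d12_4, d12_5, d02_0, d02_1, d02_2, d02_3, d02_4, d02_5, r01]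
    linear_combination ((-1:ℝ) * Ck κ₁ (x 0) * (Sk κ₁ (x 0))⁻¹ * (Sk κ₂ (x 1))⁻¹ * Real.sin (x 2)^2 * x 4) * pyth2 + ((-1:ℝ) * Sk κ₂ (x 1) * Ck κ₂ (x 1) * (Sk κ₂ (x 1))⁻¹ * x 3 * κ₂ + (1:ℝ) * Ck κ₁ (x 0) * (Sk κ₁ (x 0))⁻¹ * Sk κ₂ (x 1)^2 * (Sk κ₂ (x 1))⁻¹ * x 4 * κ₂) * pythf + ((-1:ℝ) * Ck κ₂ (x 1) * x 3 * κ₂ + (1:ℝ) * Ck κ₂ (x 1) * Real.cos (x 2)^2 * x 3 * κ₂ + (1:ℝ) * Ck κ₁ (x 0) * (Sk κ₁ (x 0))⁻¹ * Sk κ₂ (x 1) * x 4 * κ₂ + (-1:ℝ) * Ck κ₁ (x 0) * (Sk κ₁ (x 0))⁻¹ * Sk κ₂ (x 1) * Real.cos (x 2)^2 * x 4 * κ₂) * hz2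
  · -- relation 8
    rw [pb_expand, d13_0, d13_1, d13_2, d13_3, d13_4, d13_5, d03_0, d03_1, d03_2, d03_3, d03_4, d03_5, r01]
    linear_combination ((-1:ℝ) * Ck κ₁ (x 0) * (Sk κ₁ (x 0))⁻¹ * (Sk κ₂ (x 1))⁻¹ * Real.cos (x 2)^2 * x 4) * pyth2 + ((-1:ℝ) * Ck κ₂ (x 1) * x 3 * κ₂ + (1:ℝ) * Ck κ₁ (x 0) * (Sk κ₁ (x 0))⁻¹ * Sk κ₂ (x 1) * x 4 * κ₂) * pythf + ((-1:ℝ) * Ck κ₂ (x 1) * Real.cos (x 2)^2 * x 3 * κ₂ + (1:ℝ) * Ck κ₁ (x 0) * (Sk κ₁ (x 0))⁻¹ * Sk κ₂ (x 1) * Real.cos (x 2)^2 * x 4 * κ₂) * hz2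
  · -- relation 9
    rw [pb_expand, d23_0, d23_1, d23_2, d23_3, d23_4, d23_5, d03_0, d03_1, d03_2, d03_3, d03_4, d03_5, r02]
    linear_combination (0:ℝ) * pyth1
  · -- relation 10
    rw [pb_expand, d01_0, d01_1, d01_2, d01_3, d01_4, d01_5, d02_0, d02_1, d02_2, d02_3, d02_4, d02_5, r12]
    linear_combination ((-1:ℝ) * (Sk κ₁ (x 0))⁻¹^2 * Ck κ₂ (x 1)^2 * Real.cos (x 2) * x 4 + (1:ℝ) * (Sk κ₁ (x 0))⁻¹^2 * Sk κ₂ (x 1) * Ck κ₂ (x 1) * (Sk κ₂ (x 1))⁻¹^2 * Real.sin (x 2) * x 5 + (-1:ℝ) * (Sk κ₁ (x 0))⁻¹^2 * Sk κ₂ (x 1)^2 * Real.cos (x 2) * x 4 * κ₂) * pyth1 + ((1:ℝ) * Sk κ₁ (x 0)^2 * (Sk κ₁ (x 0))⁻¹^2 * Real.cos (x 2) * x 4 * κ₁) * pyth2 + ((1:ℝ) * Real.cos (x 2) * x 4 * κ₁ + (-1:ℝ) * Sk κ₂ (x 1) * Ck κ₂ (x 1) * (Sk κ₂ (x 1))⁻¹^2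 * Real.sin (x 2) * x 5 * κ₁ + (1:ℝ) * Sk κ₁ (x 0) * (Sk κ₁ (x 0))⁻¹ * Real.cos (x 2) * x 4 * κ₁ + (-1:ℝ) * Sk κ₁ (x 0) * (Sk κ₁ (x 0))⁻¹ * Sk κ₂ (x 1) * Ck κ₂ (x 1) * (Sk κ₂ (x 1))⁻¹^2 * Real.sin (x 2) * x 5 * κ₁) * hz1 + ((-1:ℝ) * Ck κ₂ (x 1) * (Sk κ₂ (x 1))⁻¹ * Real.sin (x 2) * x 5 * κ₁ + (1:ℝ) * (Sk κ₁ (x 0))⁻¹^2 * Ck κ₂ (x 1) * (Sk κ₂ (x 1))⁻¹ * Real.sin (x 2) * x 5) * hz2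
  · -- relation 11
    rw [pb_expand, d01_0, d01_1, d01_2, d01_3, d01_4, d01_5, d03_0, d03_1, d03_2, d03_3, d03_4, d03_5, r13]
    linear_combination ((-1:ℝ) * (Sk κ₁ (x 0))⁻¹^2 * Ck κ₂ (x 1)^2 * Real.sin (x 2) * x 4 + (-1:ℝ) * (Sk κ₁ (x 0))⁻¹^2 * Sk κ₂ (x 1) * Ck κ₂ (x 1) * (Sk κ₂ (x 1))⁻¹^2 * Real.cos (x 2) * x 5 + (-1:ℝ) * (Sk κ₁ (x 0))⁻¹^2 * Sk κ₂ (x 1)^2 * Real.sin (x 2) * x 4 * κ₂) * pyth1 + ((1:ℝ) * Sk κ₁ (x 0)^2 * (Sk κ₁ (x 0))⁻¹^2 * Real.sin (x 2) * x 4 * κ₁) * pyth2 + ((1:ℝ) * Real.sin (x 2) * x 4 * κ₁ + (1:ℝ) * Sk κ₂ (x 1) * Ck κ₂ (x 1) * (Sk κ₂ (x 1))⁻¹^2 * Real.cos (x 2) * x 5 * κ₁ + (1:ℝ) * Sk κ₁ (x 0) * (Sk κ₁ (x 0))⁻¹ * Real.sin (x 2) * x 4 * κ₁ + (1:ℝ)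 * Sk κ₁ (x 0) * (Sk κ₁ (x 0))⁻¹ * Sk κ₂ (x 1) * Ck κ₂ (x 1) * (Sk κ₂ (x 1))⁻¹^2 * Real.cos (x 2) * x 5 * κ₁) * hz1 + ((1:ℝ) * Ck κ₂ (x 1) * (Sk κ₂ (x 1))⁻¹ * Real.cos (x 2) * x 5 * κ₁ + (-1:ℝ) * (Sk κ₁ (x 0))⁻¹^2 * Ck κ₂ (x 1) * (Sk κ₂ (x 1))⁻¹ * Real.cos (x 2) * x 5) * hz2
  · -- relation 12
    rw [pb_expand, d02_0, d02_1, d02_2, d02_3, d02_4, d02_5, d03_0, d03_1, d03_2, d03_3, d03_4, d03_5, r23]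
    linear_combination ((-1:ℝ) * (Sk κ₁ (x 0))⁻¹^2 * (Sk κ₂ (x 1))⁻¹^2 * Real.sin (x 2)^2 * x 5 + (-1:ℝ) * (Sk κ₁ (x 0))⁻¹^2 * (Sk κ₂ (x 1))⁻¹^2 * Real.cos (x 2)^2 * x 5 + (1:ℝ) * (Sk κ₁ (x 0))⁻¹^2 * Ck κ₂ (x 1)^2 * (Sk κ₂ (x 1))⁻¹^2 * Real.sin (x 2)^2 * x 5 + (1:ℝ) * (Sk κ₁ (x 0))⁻¹^2 * Ck κ₂ (x 1)^2 * (Sk κ₂ (x 1))⁻¹^2 * Real.cos (x 2)^2 * x 5) * pyth1 + ((1:ℝ) * (Sk κ₁ (x 0))⁻¹^2 * (Sk κ₂ (x 1))⁻¹^2 * Real.sin (x 2)^2 * x 5 + (1:ℝ) * (Sk κ₁ (x 0))⁻¹^2 * (Sk κ₂ (x 1))⁻¹^2 * Real.cos (x 2)^2 * x 5 + (-1:ℝ) * Sk κ₁ (x 0)^2 * (Sk κ₁ (x 0))⁻¹^2 * (Sk κ₂ (x 1))⁻¹^2 * Real.sin (x 2)^2 * x 5 * κ₁ + (-1:ℝ)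 * Sk κ₁ (x 0)^2 * (Sk κ₁ (x 0))⁻¹^2 * (Sk κ₂ (x 1))⁻¹^2 * Real.cos (x 2)^2 * x 5 * κ₁) * pyth2 + ((1:ℝ) * (Sk κ₁ (x 0))⁻¹^2 * Sk κ₂ (x 1) * (Sk κ₂ (x 1))⁻¹ * x 5 * κ₂ + (-1:ℝ) * (Sk κ₁ (x 0))⁻¹^2 * Sk κ₂ (x 1)^2 * (Sk κ₂ (x 1))⁻¹^2 * x 5 * κ₂ + (1:ℝ) * Sk κ₁ (x 0)^2 * (Sk κ₁ (x 0))⁻¹^2 * Sk κ₂ (x 1)^2 * (Sk κ₂ (x 1))⁻¹^2 * x 5 * κ₁ * κ₂) * pythf + ((1:ℝ) * Sk κ₂ (x 1)^2 * (Sk κ₂ (x 1))⁻¹^2 * x 5 * κ₁ * κ₂ + (1:ℝ) * Sk κ₁ (x 0) * (Sk κ₁ (x 0))⁻¹ * Sk κ₂ (x 1)^2 * (Sk κ₂ (x 1))⁻¹^2 * x 5 * κ₁ * κ₂) * hz1 + ((1:ℝ) * x 5 * κ₁ * κ₂ + (1:ℝ) * Sk κ₂ (x 1) * (Sk κ₂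 (x 1))⁻¹ * x 5 * κ₁ * κ₂ + (-1:ℝ) * (Sk κ₁ (x 0))⁻¹^2 * Sk κ₂ (x 1) * (Sk κ₂ (x 1))⁻¹ * x 5 * κ₂) * hz2
  · -- relation 13
    rw [pb_expand, d01_0, d01_1, d01_2, d01_3, d01_4, d01_5, d23_0, d23_1, d23_2, d23_3, d23_4, d23_5]
    linear_combination (0:ℝ) * pyth1
  · -- relation 14
    rw [pb_expand, d02_0, d02_1, d02_2, d02_3, d02_4, d02_5, d13_0, d13_1, d13_2, d13_3, d13_4, d13_5]
    linear_combination ((-1:ℝ) * Ck κ₁ (x 0) * (Sk κ₁ (x 0))⁻¹ * (Sk κ₂ (x 1))⁻¹ * Real.cos (x 2) * Real.sin (x 2) * x 4) * pyth2 + ((-1:ℝ) * Ck κ₂ (x 1) * Real.cos (x 2) * Real.sin (x 2) * x 3 * κ₂ + (1:ℝ) * Ck κ₁ (x 0) * (Sk κ₁ (x 0))⁻¹ * Sk κ₂ (x 1) * Real.cos (x 2) * Real.sin (x 2) * x 4 * κ₂) * hz2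
  · -- relation 15
    rw [pb_expand, d03_0, d03_1, d03_2, d03_3, d03_4, d03_5, d12_0, d12_1, d12_2, d12_3, d12_4, d12_5]
    linear_combination ((-1:ℝ) * Ck κ₁ (x 0) * (Sk κ₁ (x 0))⁻¹ * (Sk κ₂ (x 1))⁻¹ * Real.cos (x 2) * Real.sin (x 2) * x 4) * pyth2 + ((-1:ℝ) * Ck κ₂ (x 1) * Real.cos (x 2) * Real.sin (x 2) * x 3 * κ₂ + (1:ℝ) * Ck κ₁ (x 0) * (Sk κ₁ (x 0))⁻¹ * Sk κ₂ (x 1) * Real.cos (x 2) * Real.sin (x 2) * x 4 * κ₂) * hz2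

end
end Paper
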